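/- Let (x^k, u^k) be NCS iterates and let x⋆ be a primal solution with dual certificate u⋆. Then for every k ≥ 0, D²(x^{k+1} − x^k, u^{k+1} − u^k) ≤ (1/(k+1)) · D²(x⁰ − x⋆, u⁰ − u⋆). -/

import Mathlib

open Matrix

-- Moore–Penrose pseudoinverse, characterized by the four Penrose conditions
-- (which determine it uniquely when a solution exists).
open Classical in
noncomputable def mpInv {k l : ℕ} (A : Matrix (Fin k) (Fin l) ℝ) : Matrix (Fin l) (Fin k) ℝ :=
  if h : ∃ X : Matrix (Fin l) (Fin k) ℝ,
      A * X * A = A ∧ X * A * X = X ∧ (A * X)ᵀ = A * X ∧ (X * A)ᵀ = X * A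
  then h.choose else 0

-- `ProxRel g α z u'` says that `u' = prox_{αg*}(z)`, i.e. that
-- `α⁻¹ (z - u')` is a minimizer of `x ↦ g(x) + (α/2)‖x - z/α‖²`
-- (by Moreau's identity `prox_{αg*}(z) = z - α argmin_x {g(x) + (α/2)‖x - z/α‖²}`).
def ProxRel {m : ℕ} (g : (Fin m → ℝ) → ℝ) (α : ℝ) (z u' : Fin m → ℝ) : Prop :=
  IsMinOn (fun y : Fin m → ℝ => g y + (α / 2) * ((y - α⁻¹ • z) ⬝ᵥ (y - α⁻¹ • z)))
    Set.univ (α⁻¹ • (z - u'))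

/-- The squared seminorm `D²(x, u) = ‖u − αAx‖² + ‖x‖²_{αM − α²AᵀA}`. -/
noncomputable def Dsq {m n : ℕ} (A : Matrix (Fin m) (Fin n) ℝ) (α : ℝ)
    (M : Matrix (Fin n) (Fin n) ℝ) (x : Fin n → ℝ) (u : Fin m → ℝ) : ℝ :=
  (u - α • (A *ᵥ x)) ⬝ᵥ (u - α • (A *ᵥ x)) +
    x ⬝ᵥ ((α • M - α ^ 2 • (Aᵀ * A)) *ᵥ x)

/-- The seminorm `D(x, u) = (‖u − αAx‖² + ‖x‖²_{αM − α²AᵀA})^{1/2}`. -/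
noncomputable def Dnorm {m n : ℕ} (A : Matrix (Fin m) (Fin n) ℝ) (α : ℝ)
    (M : Matrix (Fin n) (Fin n) ℝ) (x : Fin n → ℝ) (u : Fin m → ℝ) : ℝ :=
  Real.sqrt (Dsq A α M x u)

/-! ### Auxiliary lemmas -/

lemma dot_trans {a b : ℕ} (B : Matrix (Fin a) (Fin b) ℝ) (x : Fin b → ℝ) (y : Fin a → ℝ) :
    x ⬝ᵥ (Bᵀ *ᵥ y) = (B *ᵥ x) ⬝ᵥ y := by
  rw [mulVec_transpose, dotProduct_comm, ← dotProduct_mulVec, dotProduct_comm]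

lemma dps_nonneg {a : ℕ} (v : Fin a → ℝ) : 0 ≤ v ⬝ᵥ v := by
  simpa using dotProduct_self_star_nonneg v

lemma penrose_exists {l : ℕ} (M : Matrix (Fin l) (Fin l) ℝ) (hM : Mᵀ = M) :
    ∃ X : Matrix (Fin l) (Fin l) ℝ,
      M * X * M = M ∧ X * M * X = X ∧ (M * X)ᵀ = M * X ∧ (X * M)ᵀ = X * M := by
  have hherm : M.IsHermitian := by
    rwa [IsHermitian, conjTranspose_eq_transpose_of_trivial]
  set U : Matrix (Fin l) (Fin l) ℝ := (hherm.eigenvectorUnitary : Matrix (Fin l) (Fin l) ℝ) with hUdef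
  have hU1 : star U * U = 1 := Unitary.coe_star_mul_self _
  set d : Fin l → ℝ := hherm.eigenvalues with hddef
  have hspec : M = U * diagonal d * star U := by
    have := hherm.spectral_theorem
    simpa using this
  have hU1' : ∀ X : Matrix (Fin l) (Fin l) ℝ, star U * (U * X) = X := fun X => by
    rw [← mul_assoc, hU1, one_mul]
  have hmul : ∀ C D : Matrix (Fin l) (Fin l) ℝ,
      (U * C * star U) * (U * D * star U) = U * (C * D) * star U := by
    intro C D
    simp only [mul_assoc, hU1']
  have hstarU : star U = Uᵀ := by
    rw [← conjTranspose_eq_transpose_of_trivial]; rfl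
  have htr : ∀ e : Fin l → ℝ, (U * diagonal e * star U)ᵀ = U * diagonal e * star U := by
    intro e
    rw [hstarU, transpose_mul, transpose_mul, transpose_transpose, diagonal_transpose,
      mul_assoc]
  have hdd : ∀ (e f : Fin l → ℝ), diagonal e * diagonal f = diagonal (fun i => e i * f i) :=
    fun e f => diagonal_mul_diagonal e f
  refine ⟨U * diagonal (fun i => (d i)⁻¹) * star U, ?_, ?_, ?_, ?_⟩
  · rw [hspec, hmul, hmul, hdd, hdd]
    congr 2
    funext i
    rcases eq_or_ne (d i) 0 with h | h
    · simp [h]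
    · field_simp
  · rw [hspec, hmul, hmul, hdd, hdd]
    have : (fun i => (d i)⁻¹ * d i * (d i)⁻¹) = fun i => (d i)⁻¹ := by
      funext i
      rcases eq_or_ne (d i) 0 with h | h
      · simp [h]
      · field_simp
    rw [this]
  · rw [hspec, hmul, hdd, htr]
  · rw [hspec, hmul, hdd, htr]

lemma mpInv_mulVec {m n : ℕ} (A : Matrix (Fin m) (Fin n) ℝ) {α : ℝ} (hα : 0 < α)
    (M : Matrix (Fin n) (Fin n) ℝ) (hMsymm : Mᵀ = M)
    (hMpsd : (M - α • (Aᵀ * A)).PosSemidef) (v : Fin m → ℝ) :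
    M *ᵥ (mpInv M *ᵥ (Aᵀ *ᵥ v)) = Aᵀ *ᵥ v := by
  have hex := penrose_exists M hMsymm
  have hXdef : mpInv M = hex.choose := dif_pos hex
  obtain ⟨h1, h2, h3, h4⟩ := hex.choose_spec
  set X := hex.choose
  set E : Matrix (Fin n) (Fin n) ℝ := 1 - M * X with hEdef
  have hEsymm : Eᵀ = E := by
    rw [hEdef, transpose_sub, transpose_one, h3]
  have hEM : E * M = 0 := by
    rw [hEdef, sub_mul, one_mul, h1, sub_self]
  have hME : M * E = 0 := by
    have : (E * M)ᵀ = 0 := by rw [hEM, transpose_zero]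
    rwa [transpose_mul, hMsymm, hEsymm] at this
  have hAE : ∀ w : Fin n → ℝ, A *ᵥ (E *ᵥ w) = 0 := by
    intro w
    have hMv : M *ᵥ (E *ᵥ w) = 0 := by
      rw [mulVec_mulVec, hME, zero_mulVec]
    have hpsd := hMpsd.dotProduct_mulVec_nonneg (E *ᵥ w)
    set z := E *ᵥ w
    have hexp : star z ⬝ᵥ ((M - α • (Aᵀ * A)) *ᵥ z) =
        z ⬝ᵥ (M *ᵥ z) - α * ((A *ᵥ z) ⬝ᵥ (A *ᵥ z)) := by
      rw [star_trivial, sub_mulVec, dotProduct_sub, smul_mulVec, dotProduct_smul,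
        ← mulVec_mulVec, dot_trans, smul_eq_mul]
    rw [hexp, hMv, dotProduct_zero] at hpsd
    have : (A *ᵥ z) ⬝ᵥ (A *ᵥ z) ≤ 0 := by nlinarith
    have h0 : (A *ᵥ z) ⬝ᵥ (A *ᵥ z) = 0 :=
      le_antisymm this (dps_nonneg _)
    exact dotProduct_self_eq_zero.mp h0
  have hu0 : E *ᵥ (Aᵀ *ᵥ v) = 0 := by
    set u0 := E *ᵥ (Aᵀ *ᵥ v) with hu0def
    have : u0 ⬝ᵥ u0 = 0 := by
      calc u0 ⬝ᵥ u0 = u0 ⬝ᵥ (Eᵀ *ᵥ (Aᵀ *ᵥ v)) := by rw [hEsymm]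
        _ = (E *ᵥ u0) ⬝ᵥ (Aᵀ *ᵥ v) := dot_trans E u0 (Aᵀ *ᵥ v)
        _ = (A *ᵥ (E *ᵥ u0)) ⬝ᵥ v := dot_trans A (E *ᵥ u0) v
        _ = 0 := by rw [hAE, zero_dotProduct]
    exact dotProduct_self_eq_zero.mp this
  have : Aᵀ *ᵥ v - M *ᵥ (X *ᵥ (Aᵀ *ᵥ v)) = 0 := by
    rw [mulVec_mulVec, ← hu0, hEdef, sub_mulVec, one_mulVec]
  rw [hXdef]
  exact (sub_eq_zero.mp this).symm

lemma small_t {s C : ℝ} (hC : 0 ≤ C) (h : ∀ t : ℝ, 0 < t → t ≤ 1 → s ≤ C * t) : s ≤ 0 := by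
  by_contra hs
  push_neg at hs
  have ht1 : 0 < min 1 (s / (2 * (C + 1))) := by positivity
  have ht2 : min 1 (s / (2 * (C + 1))) ≤ 1 := min_le_left _ _
  have h3 := h _ ht1 ht2
  have h4 : min 1 (s / (2 * (C + 1))) ≤ s / (2 * (C + 1)) := min_le_right _ _
  have h5 : C * min 1 (s / (2 * (C + 1))) ≤ C * (s / (2 * (C + 1))) :=
    mul_le_mul_of_nonneg_left h4 hC
  have h6 : C * (s / (2 * (C + 1))) < s := by
    have hD : (0:ℝ) < 2 * (C + 1) := by positivity
    rw [← mul_div_assoc, div_lt_iff₀ hD]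
    nlinarith
  linarith

lemma prox_subgrad {m : ℕ} {g : (Fin m → ℝ) → ℝ} (hg : ConvexOn ℝ Set.univ g)
    {α : ℝ} (hα : 0 < α) {z u' : Fin m → ℝ} (h : ProxRel g α z u') (y : Fin m → ℝ) :
    g (α⁻¹ • (z - u')) + u' ⬝ᵥ (y - α⁻¹ • (z - u')) ≤ g y := by
  set ys := α⁻¹ • (z - u') with hysdef
  set d := y - ys with hddef
  have hmin : ∀ w, g ys + (α/2) * ((ys - α⁻¹ • z) ⬝ᵥ (ys - α⁻¹ • z)) ≤
      g w + (α/2) * ((w - α⁻¹ • z) ⬝ᵥ (w - α⁻¹ • z)) := fun w => h (Set.mem_univ w)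
  have hys : ys - α⁻¹ • z = -(α⁻¹ • u') := by
    rw [hysdef]; module
  have key : ∀ t : ℝ, 0 < t → t ≤ 1 →
      u' ⬝ᵥ d - (g y - g ys) ≤ ((α/2) * (d ⬝ᵥ d)) * t := by
    intro t ht0 ht1
    have hw : ys + t • d = (1 - t) • ys + t • y := by rw [hddef]; module
    have hconv : g (ys + t • d) ≤ (1 - t) * g ys + t * g y := by
      rw [hw]
      exact hg.2 (Set.mem_univ ys) (Set.mem_univ y) (by linarith) (le_of_lt ht0) (by ring)
    have hmw := hmin (ys + t • d)
    have hq : (ys + t • d - α⁻¹ • z) = t • d - α⁻¹ • u' := by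
      rw [hysdef]; module
    rw [hq, hys] at hmw
    have hexp : (t • d - α⁻¹ • u') ⬝ᵥ (t • d - α⁻¹ • u') =
        t^2 * (d ⬝ᵥ d) - 2 * t * α⁻¹ * (u' ⬝ᵥ d) +
          (-(α⁻¹ • u')) ⬝ᵥ (-(α⁻¹ • u')) := by
      simp only [dotProduct_sub, sub_dotProduct, dotProduct_smul, smul_dotProduct,
        smul_eq_mul, dotProduct_neg, neg_dotProduct, neg_neg]
      rw [dotProduct_comm d u']
      ring
    rw [hexp] at hmw
    have hainv : α * α⁻¹ = 1 := mul_inv_cancel₀ (ne_of_gt hα)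
    have expand : (α/2) * (t^2 * (d ⬝ᵥ d) - 2 * t * α⁻¹ * (u' ⬝ᵥ d) +
        (-(α⁻¹ • u')) ⬝ᵥ (-(α⁻¹ • u'))) =
        (α/2) * t^2 * (d ⬝ᵥ d) - (α * α⁻¹) * (t * (u' ⬝ᵥ d)) +
          (α/2) * ((-(α⁻¹ • u')) ⬝ᵥ (-(α⁻¹ • u'))) := by ring
    rw [expand, hainv, one_mul] at hmw
    have h7 : t * (u' ⬝ᵥ d) ≤ t * (g y - g ys) + (α/2) * t^2 * (d ⬝ᵥ d) := by
      nlinarith [hmw, hconv]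
    rw [← mul_le_mul_iff_right₀ ht0]
    nlinarith [h7]
  have hd2 : 0 ≤ d ⬝ᵥ d := dps_nonneg d
  have := small_t (mul_nonneg (by linarith) hd2) key
  linarith

lemma Dsq_expand {m n : ℕ} (A : Matrix (Fin m) (Fin n) ℝ) (α : ℝ)
    (M : Matrix (Fin n) (Fin n) ℝ) (x : Fin n → ℝ) (u : Fin m → ℝ) :
    Dsq A α M x u =
      u ⬝ᵥ u - 2 * α * (u ⬝ᵥ (A *ᵥ x)) + α * (x ⬝ᵥ (M *ᵥ x)) := by
  have h1 : x ⬝ᵥ ((Aᵀ * A) *ᵥ x) = (A *ᵥ x) ⬝ᵥ (A *ᵥ x) := by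
    rw [← mulVec_mulVec, dot_trans]
  simp only [Dsq, dotProduct_sub, sub_dotProduct, dotProduct_smul, smul_dotProduct,
    smul_eq_mul, sub_mulVec, smul_mulVec, dotProduct_comm (α • (A *ᵥ x)) u]
  rw [h1]
  ring

lemma Dsq_neg {m n : ℕ} (A : Matrix (Fin m) (Fin n) ℝ) (α : ℝ)
    (M : Matrix (Fin n) (Fin n) ℝ) (x : Fin n → ℝ) (u : Fin m → ℝ) :
    Dsq A α M (-x) (-u) = Dsq A α M x u := by
  simp only [Dsq_expand, mulVec_neg, dotProduct_neg, neg_dotProduct, neg_neg]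

lemma Dsq_nonneg {m n : ℕ} (A : Matrix (Fin m) (Fin n) ℝ) {α : ℝ} (hα : 0 < α)
    (M : Matrix (Fin n) (Fin n) ℝ)
    (hMpsd : (M - α • (Aᵀ * A)).PosSemidef) (x : Fin n → ℝ) (u : Fin m → ℝ) :
    0 ≤ Dsq A α M x u := by
  have h1 : α • M - α ^ 2 • (Aᵀ * A) = α • (M - α • (Aᵀ * A)) := by
    rw [smul_sub, smul_smul, pow_two]
  have h2 := hMpsd.dotProduct_mulVec_nonneg x
  rw [star_trivial] at h2
  have : 0 ≤ x ⬝ᵥ ((α • M - α ^ 2 • (Aᵀ * A)) *ᵥ x) := by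
    rw [h1, smul_mulVec, dotProduct_smul, smul_eq_mul]
    exact mul_nonneg hα.le h2
  have h3 := dps_nonneg (u - α • (A *ᵥ x))
  rw [Dsq]
  linarith

lemma core {m n : ℕ} (A : Matrix (Fin m) (Fin n) ℝ) {α : ℝ}
    (M : Matrix (Fin n) (Fin n) ℝ) (hMsymm : Mᵀ = M)
    (p p' : Fin n → ℝ) (q q' : Fin m → ℝ)
    (h1 : M *ᵥ (p - p') = Aᵀ *ᵥ q)
    (h3 : 0 ≤ q' ⬝ᵥ ((q - q') + α • (A *ᵥ ((2:ℝ) • p' - p)))) :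
    Dsq A α M p' q' + Dsq A α M (p - p') (q - q') ≤ Dsq A α M p q := by
  have e2 : p' ⬝ᵥ (M *ᵥ (p - p')) = p' ⬝ᵥ (Aᵀ *ᵥ q) := by rw [h1]
  have e2' : p' ⬝ᵥ (M *ᵥ p) - p' ⬝ᵥ (M *ᵥ p') = q ⬝ᵥ (A *ᵥ p') := by
    rw [← dotProduct_sub, ← mulVec_sub] at *
    rw [e2, dot_trans, dotProduct_comm]
  have c1 : q ⬝ᵥ q' = q' ⬝ᵥ q := dotProduct_comm q q'
  have c2 : p ⬝ᵥ (M *ᵥ p') = p' ⬝ᵥ (M *ᵥ p) := by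
    conv_lhs => rw [← hMsymm, dot_trans, dotProduct_comm]
  have E : Dsq A α M p q =
      Dsq A α M p' q' + Dsq A α M (p - p') (q - q') +
        2 * (q' ⬝ᵥ ((q - q') + α • (A *ᵥ ((2:ℝ) • p' - p)))) := by
    simp only [Dsq_expand, dotProduct_sub, sub_dotProduct, dotProduct_add, add_dotProduct,
      dotProduct_smul, smul_dotProduct, smul_eq_mul, mulVec_sub, mulVec_add, mulVec_smul]
    linear_combination c1 + α * c2 + 2 * α * e2'
  linarith

theorem ncs_summable_rate
    {m n : ℕ}
    (A : Matrix (Fin m) (Fin n) ℝ) (b : Fin m → ℝ)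
    (α : ℝ) (hα : 0 < α)
    (g : (Fin m → ℝ) → ℝ) (hg : ConvexOn ℝ Set.univ g)
    (M : Matrix (Fin n) (Fin n) ℝ) (hMsymm : Mᵀ = M)
    (hMpsd : (M - α • (Aᵀ * A)).PosSemidef)
    -- NCS iterates:
    (x : ℕ → Fin n → ℝ) (u : ℕ → Fin m → ℝ)
    (hx : ∀ k, x (k + 1) = x k - mpInv M *ᵥ (Aᵀ *ᵥ u k))
    (hu : ∀ k, ProxRel g α
      (u k + α • (A *ᵥ ((2 : ℝ) • x (k + 1) - x k) - b)) (u (k + 1)))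
    -- a primal solution x⋆ with dual certificate u⋆:
    (xs : Fin n → ℝ) (us : Fin m → ℝ)
    (hxs : ∀ y, g (A *ᵥ xs - b) ≤ g (A *ᵥ y - b))
    (hus : Aᵀ *ᵥ us = 0)
    (hsub : ∀ y, g (A *ᵥ xs - b) + us ⬝ᵥ (y - (A *ᵥ xs - b)) ≤ g y) :
    ∀ k : ℕ,
      Dsq A α M (x (k + 1) - x k) (u (k + 1) - u k) ≤
        (1 / (k + 1 : ℝ)) * Dsq A α M (x 0 - xs) (u 0 - us) := by
  -- step relation for x
  have hstep : ∀ k, M *ᵥ (x k - x (k + 1)) = Aᵀ *ᵥ u k := by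
    intro k
    rw [hx k, sub_sub_cancel]
    exact mpInv_mulVec A hα M hMsymm hMpsd (u k)
  -- the points where subgradient inequalities hold
  set z : ℕ → Fin m → ℝ :=
    fun k => u k + α • (A *ᵥ ((2 : ℝ) • x (k + 1) - x k) - b) with hzdef
  set ys : ℕ → Fin m → ℝ := fun k => α⁻¹ • (z k - u (k + 1)) with hysdef
  have sg : ∀ k y, g (ys k) + u (k + 1) ⬝ᵥ (y - ys k) ≤ g y := by
    intro k y
    exact prox_subgrad hg hα (hu k) y
  have hαys : ∀ k, α • ys k = z k - u (k + 1) := by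
    intro k
    rw [hysdef]
    exact smul_inv_smul₀ (ne_of_gt hα) _
  -- sequences
  set a : ℕ → ℝ := fun k => Dsq A α M (x (k + 1) - x k) (u (k + 1) - u k) with hadef
  set bb : ℕ → ℝ := fun k => Dsq A α M (x k - xs) (u k - us) with hbbdef
  -- L3 : bb (k+1) + a k ≤ bb k
  have L3 : ∀ k, bb (k + 1) + a k ≤ bb k := by
    intro k
    have h1 : M *ᵥ ((x k - xs) - (x (k + 1) - xs)) = Aᵀ *ᵥ (u k - us) := by
      have : (x k - xs) - (x (k + 1) - xs) = x k - x (k + 1) := by module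
      rw [this, hstep, mulVec_sub, hus, sub_zero]
    have hT : ((u k - us) - (u (k + 1) - us)) +
        α • (A *ᵥ ((2:ℝ) • (x (k + 1) - xs) - (x k - xs))) =
        α • (ys k - (A *ᵥ xs - b)) := by
      rw [eq_comm, smul_sub, hαys k, hzdef]
      simp only [mulVec_sub, mulVec_smul, smul_sub, smul_add]
      module
    have hmono : 0 ≤ (u (k + 1) - us) ⬝ᵥ (ys k - (A *ᵥ xs - b)) := by
      have i1 := sg k (A *ᵥ xs - b)
      have i2 := hsub (ys k)
      have e1 : u (k + 1) ⬝ᵥ ((A *ᵥ xs - b) - ys k) = -(u (k + 1) ⬝ᵥ (ys k - (A *ᵥ xs - b))) := by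
        rw [← dotProduct_neg, neg_sub]
      have e2 : us ⬝ᵥ (ys k - (A *ᵥ xs - b)) = us ⬝ᵥ (ys k - (A *ᵥ xs - b)) := rfl
      rw [sub_dotProduct]
      rw [e1] at i1
      linarith
    have h3 : 0 ≤ (u (k + 1) - us) ⬝ᵥ (((u k - us) - (u (k + 1) - us)) +
        α • (A *ᵥ ((2:ℝ) • (x (k + 1) - xs) - (x k - xs)))) := by
      rw [hT, dotProduct_smul, smul_eq_mul]
      exact mul_nonneg hα.le hmono
    have := core A M hMsymm (x k - xs) (x (k + 1) - xs) (u k - us) (u (k + 1) - us) h1 h3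
    have hd1 : (x k - xs) - (x (k + 1) - xs) = -((x (k + 1) - x k)) := by module
    have hd2 : (u k - us) - (u (k + 1) - us) = -((u (k + 1) - u k)) := by module
    rw [hd1, hd2, Dsq_neg] at this
    calc bb (k + 1) + a k = Dsq A α M (x (k + 1) - xs) (u (k + 1) - us) +
          Dsq A α M (x (k + 1) - x k) (u (k + 1) - u k) := rfl
      _ ≤ Dsq A α M (x k - xs) (u k - us) := this
      _ = bb k := rfl
  -- L4 : a (k+1) ≤ a k
  have L4 : ∀ k, a (k + 1) ≤ a k := by
    intro k
    have h1 : M *ᵥ ((x (k + 1) - x k) - (x (k + 2) - x (k + 1))) =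
        Aᵀ *ᵥ (u (k + 1) - u k) := by
      have : (x (k + 1) - x k) - (x (k + 2) - x (k + 1)) =
          (x (k + 1) - x (k + 2)) - (x k - x (k + 1)) := by module
      rw [this, mulVec_sub, hstep, hstep, ← mulVec_sub]
    have hT : ((u (k + 1) - u k) - (u (k + 2) - u (k + 1))) +
        α • (A *ᵥ ((2:ℝ) • (x (k + 2) - x (k + 1)) - (x (k + 1) - x k))) =
        α • (ys (k + 1) - ys k) := by
      rw [eq_comm, smul_sub, hαys (k + 1), hαys k, hzdef]
      simp only [mulVec_sub, mulVec_smul, smul_sub, smul_add]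
      module
    have hmono : 0 ≤ (u (k + 2) - u (k + 1)) ⬝ᵥ (ys (k + 1) - ys k) := by
      have i1 := sg k (ys (k + 1))
      have i2 := sg (k + 1) (ys k)
      have e1 : u (k + 2) ⬝ᵥ (ys k - ys (k + 1)) =
          -(u (k + 2) ⬝ᵥ (ys (k + 1) - ys k)) := by
        rw [← dotProduct_neg, neg_sub]
      rw [sub_dotProduct]
      rw [e1] at i2
      linarith
    have h3 : 0 ≤ (u (k + 2) - u (k + 1)) ⬝ᵥ (((u (k + 1) - u k) - (u (k + 2) - u (k + 1))) +
        α • (A *ᵥ ((2:ℝ) • (x (k + 2) - x (k + 1)) - (x (k + 1) - x k)))) := by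
      rw [hT, dotProduct_smul, smul_eq_mul]
      exact mul_nonneg hα.le hmono
    have := core A M hMsymm (x (k + 1) - x k) (x (k + 2) - x (k + 1))
      (u (k + 1) - u k) (u (k + 2) - u (k + 1)) h1 h3
    have hnn := Dsq_nonneg A hα M hMpsd
      ((x (k + 1) - x k) - (x (k + 2) - x (k + 1)))
      ((u (k + 1) - u k) - (u (k + 2) - u (k + 1)))
    calc a (k + 1) = Dsq A α M (x (k + 2) - x (k + 1)) (u (k + 2) - u (k + 1)) := rfl
      _ ≤ Dsq A α M (x (k + 1) - x k) (u (k + 1) - u k) := by linarith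
      _ = a k := rfl
  -- main induction
  have claim : ∀ k : ℕ, (k + 1 : ℝ) * a k + bb (k + 1) ≤ bb 0 := by
    intro k
    induction k with
    | zero =>
      have := L3 0
      push_cast
      linarith
    | succ k ih =>
      have hL3 := L3 (k + 1)
      have hL4 := L4 k
      have hk : (0:ℝ) ≤ (k + 1 : ℝ) := by positivity
      have hmul : (k + 1 : ℝ) * a (k + 1) ≤ (k + 1 : ℝ) * a k :=
        mul_le_mul_of_nonneg_left hL4 hk
      push_cast
      push_cast at ih
      nlinarith
  intro k
  have hclaim := claim k
  have hbbnn := Dsq_nonneg A hα M hMpsd (x (k + 1) - xs) (u (k + 1) - us)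
  have hbb1 : 0 ≤ bb (k + 1) := hbbnn
  have hk : (0:ℝ) < (k + 1 : ℝ) := by positivity
  have h1 : (k + 1 : ℝ) * a k ≤ bb 0 := by linarith
  have : a k ≤ bb 0 / (k + 1 : ℝ) := by
    rw [le_div_iff₀ hk]
    linarith [h1]
  calc Dsq A α M (x (k + 1) - x k) (u (k + 1) - u k) = a k := rfl
    _ ≤ bb 0 / (k + 1 : ℝ) := this
    _ = (1 / (k + 1 : ℝ)) * Dsq A α M (x 0 - xs) (u 0 - us) := by
      rw [one_div, div_eq_inv_mul]
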